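/- arXiv:2505.03271 — 3 statements merged into one kernel-verified Lean document; each statement's English description precedes it below -/
import Mathlib

section
/- The discrete H¹ norm ‖·‖_{δx} is an algebra norm uniformly in the discretization: there exists C > 0 independent of K ∈ ℕ and δx > 0 such that for all v, w ∈ V one has ‖v • w‖_{δx} ≤ C‖v‖_{δx}‖w‖_{δx}, where • is entrywise multiplication. -/
/-- The squared discrete H¹-type norm `‖ψ‖²_{δx}`. -/
noncomputable def discNormSq (δx : ℝ) (v : ℤ → ℂ) : ℝ :=
  2 * δx * ∑' j : ℤ, ‖v (j + 1) - v j‖ ^ 2 / δx ^ 2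
    + δx * ∑' j : ℤ, ‖v j‖ ^ 2

/-- Telescoping sum over an integer interval. -/
lemma disc_tele (F : ℤ → ℝ) {a : ℤ} : ∀ {b : ℤ}, a ≤ b →
    F b - F a = ∑ k ∈ Finset.Ico a b, (F (k + 1) - F k) := by
  have : ∀ b : ℤ, a ≤ b → F b - F a = ∑ k ∈ Finset.Ico a b, (F (k + 1) - F k) := by
    refine Int.le_induction ?_ ?_
    · simp
    · intro b hb ih
      have hins : Finset.Ico a (b + 1) = insert b (Finset.Ico a b) := by
        ext x; simp only [Finset.mem_Ico, Finset.mem_insert]; omega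
      rw [hins, Finset.sum_insert (by simp), ← ih]; ring
  exact fun {b} h => this b h

lemma disc_summable0 {K : ℕ} {v : ℤ → ℂ} (hv : ∀ j : ℤ, (K : ℤ) < |j| → v j = 0) :
    Summable (fun k : ℤ => ‖v k‖ ^ 2) := by
  refine summable_of_ne_finset_zero (s := Finset.Icc (-(K : ℤ)) K) ?_
  intro j hj
  rw [Finset.mem_Icc] at hj
  rw [hv j (lt_abs.mpr (by omega))]
  simp

lemma disc_summable1 {K : ℕ} {v : ℤ → ℂ} (hv : ∀ j : ℤ, (K : ℤ) < |j| → v j = 0) :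
    Summable (fun k : ℤ => ‖v (k + 1)‖ ^ 2) := by
  refine summable_of_ne_finset_zero (s := Finset.Icc (-(K : ℤ) - 1) K) ?_
  intro j hj
  rw [Finset.mem_Icc] at hj
  rw [hv (j + 1) (lt_abs.mpr (by omega))]
  simp

lemma disc_summableD {K : ℕ} {v : ℤ → ℂ} (hv : ∀ j : ℤ, (K : ℤ) < |j| → v j = 0) :
    Summable (fun k : ℤ => ‖v (k + 1) - v k‖ ^ 2) := by
  refine summable_of_ne_finset_zero (s := Finset.Icc (-(K : ℤ) - 1) K) ?_
  intro j hj
  rw [Finset.mem_Icc] at hj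
  rw [hv (j + 1) (lt_abs.mpr (by omega)), hv j (lt_abs.mpr (by omega))]
  simp

/-- The uniform sup bound: `|v j|² ≤ (1/(2ε)) ΣD + 2ε Σ₀`. -/
lemma disc_sup_bound {K : ℕ} {v : ℤ → ℂ} (hv : ∀ j : ℤ, (K : ℤ) < |j| → v j = 0)
    {ε : ℝ} (hε : 0 < ε) (j : ℤ) :
    ‖v j‖ ^ 2 ≤
      (1 / (2 * ε)) * ∑' k : ℤ, ‖v (k + 1) - v k‖ ^ 2
        + 2 * ε * ∑' k : ℤ, ‖v k‖ ^ 2 := by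
  have hS0 := disc_summable0 hv
  have hS1 := disc_summable1 hv
  have hSD := disc_summableD hv
  have hD_nonneg : 0 ≤ ∑' k : ℤ, ‖v (k + 1) - v k‖ ^ 2 :=
    tsum_nonneg fun k => by positivity
  have h0_nonneg : 0 ≤ ∑' k : ℤ, ‖v k‖ ^ 2 :=
    tsum_nonneg fun k => by positivity
  by_cases hj : (K : ℤ) < |j|
  · rw [hv j hj]
    simp only [norm_zero]
    have h1 : (0:ℝ) ≤ (1 / (2 * ε)) * ∑' k : ℤ, ‖v (k + 1) - v k‖ ^ 2 := by positivity
    nlinarith [mul_nonneg (by positivity : (0:ℝ) ≤ 2 * ε) h0_nonneg]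
  · push_neg at hj
    set F : ℤ → ℝ := fun k => ‖v k‖ ^ 2 with hF
    have haj : -(K : ℤ) - 1 ≤ j := by
      have := abs_le.mp hj; omega
    have hva : v (-(K : ℤ) - 1) = 0 := hv _ (lt_abs.mpr (by omega))
    have hFa : F (-(K : ℤ) - 1) = 0 := by simp [hF, hva]
    have hSg : Summable (fun k : ℤ => |F (k + 1) - F k|) := (hS1.sub hS0).abs
    have hpt : ∀ k : ℤ, |F (k + 1) - F k| ≤
        (1 / (2 * ε)) * ‖v (k + 1) - v k‖ ^ 2
          + ε * (‖v (k + 1)‖ ^ 2 + ‖v k‖ ^ 2) := by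
      intro k
      set a := ‖v (k + 1)‖ with ha
      set b := ‖v k‖ with hb
      set d := ‖v (k + 1) - v k‖ with hd
      have ha0 : 0 ≤ a := norm_nonneg _
      have hb0 : 0 ≤ b := norm_nonneg _
      have hd0 : 0 ≤ d := norm_nonneg _
      have hdd : |a - b| ≤ d := abs_norm_sub_norm_le _ _
      have hFab : F (k + 1) - F k = (a - b) * (a + b) := by
        show ‖v (k + 1)‖ ^ 2 - ‖v k‖ ^ 2 = _
        rw [← ha, ← hb]; ring
      have h1 : |F (k + 1) - F k| = |a - b| * (a + b) := by
        rw [hFab, abs_mul, abs_of_nonneg (show (0:ℝ) ≤ a + b by linarith)]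
      rw [h1]
      have h2 : |a - b| * (a + b) ≤ d * (a + b) :=
        mul_le_mul_of_nonneg_right hdd (by linarith)
      have h3 : d * (a + b) ≤ (1 / (2 * ε)) * d ^ 2 + ε * (a ^ 2 + b ^ 2) := by
        rw [← sub_nonneg]
        have expand : (1 / (2 * ε)) * d ^ 2 + ε * (a ^ 2 + b ^ 2) - d * (a + b) =
            (1 / (2 * ε)) * ((d - ε * (a + b)) ^ 2 + ε ^ 2 * (a - b) ^ 2) := by
          field_simp
          ring
        rw [expand]; positivity
      linarith
    have hSrhs : Summable (fun k : ℤ =>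
        (1 / (2 * ε)) * ‖v (k + 1) - v k‖ ^ 2
          + ε * (‖v (k + 1)‖ ^ 2 + ‖v k‖ ^ 2)) :=
      (hSD.mul_left _).add ((hS1.add hS0).mul_left _)
    have step1 : ‖v j‖ ^ 2 ≤ ∑' k : ℤ, |F (k + 1) - F k| := by
      have htel : ‖v j‖ ^ 2
          = ∑ k ∈ Finset.Ico (-(K : ℤ) - 1) j, (F (k + 1) - F k) := by
        have h := disc_tele F haj
        rw [hFa, sub_zero] at h
        exact h
      rw [htel]
      calc ∑ k ∈ Finset.Ico (-(K : ℤ) - 1) j, (F (k + 1) - F k)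
          ≤ ∑ k ∈ Finset.Ico (-(K : ℤ) - 1) j, |F (k + 1) - F k| :=
            Finset.sum_le_sum fun k _ => le_abs_self _
        _ ≤ ∑' k : ℤ, |F (k + 1) - F k| :=
            Summable.sum_le_tsum _ (fun k _ => abs_nonneg _) hSg
    have step2 : ∑' k : ℤ, |F (k + 1) - F k| ≤
        (1 / (2 * ε)) * ∑' k : ℤ, ‖v (k + 1) - v k‖ ^ 2
          + ε * ((∑' k : ℤ, ‖v (k + 1)‖ ^ 2) + ∑' k : ℤ, ‖v k‖ ^ 2) := by
      calc ∑' k : ℤ, |F (k + 1) - F k|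
          ≤ ∑' k : ℤ, ((1 / (2 * ε)) * ‖v (k + 1) - v k‖ ^ 2
              + ε * (‖v (k + 1)‖ ^ 2 + ‖v k‖ ^ 2)) :=
            Summable.tsum_le_tsum hpt hSg hSrhs
        _ = (1 / (2 * ε)) * ∑' k : ℤ, ‖v (k + 1) - v k‖ ^ 2
              + ε * ((∑' k : ℤ, ‖v (k + 1)‖ ^ 2)
                + ∑' k : ℤ, ‖v k‖ ^ 2) := by
            rw [Summable.tsum_add (hSD.mul_left _) ((hS1.add hS0).mul_left _), tsum_mul_left,
              tsum_mul_left, Summable.tsum_add hS1 hS0]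
    have hshift : ∑' k : ℤ, ‖v (k + 1)‖ ^ 2 = ∑' k : ℤ, ‖v k‖ ^ 2 :=
      (Equiv.addRight (1 : ℤ)).tsum_eq (fun k => ‖v k‖ ^ 2)
    rw [hshift] at step2
    calc ‖v j‖ ^ 2 ≤ ∑' k : ℤ, |F (k + 1) - F k| := step1
      _ ≤ _ := step2
      _ = (1 / (2 * ε)) * ∑' k : ℤ, ‖v (k + 1) - v k‖ ^ 2
            + 2 * ε * ∑' k : ℤ, ‖v k‖ ^ 2 := by ring

set_option maxHeartbeats 1000000 in
/-- the discrete H¹ norm is an algebra norm uniformly in the discretization: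
there is `C > 0` independent of `K` and `δx` with `‖v•w‖_{δx} ≤ C ‖v‖_{δx} ‖w‖_{δx}`
for all compactly supported `v, w : ℤ → ℂ`. -/
theorem stmt_8 :
    ∃ C : ℝ, 0 < C ∧
      ∀ (K : ℕ) (δx : ℝ), 0 < δx →
      ∀ v w : ℤ → ℂ, (∀ j : ℤ, (K : ℤ) < |j| → v j = 0) → (∀ j : ℤ, (K : ℤ) < |j| → w j = 0) →
        Real.sqrt (discNormSq δx (fun j => v j * w j)) ≤
          C * Real.sqrt (discNormSq δx v) * Real.sqrt (discNormSq δx w) := by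
  refine ⟨3, by norm_num, ?_⟩
  intro K δx hδ v w hv hw
  have hvw : ∀ j : ℤ, (K : ℤ) < |j| → v j * w j = 0 := fun j hj => by rw [hv j hj, zero_mul]
  -- summability
  have hSv0 := disc_summable0 hv
  have hSw0 := disc_summable0 hw
  have hSvw0 := disc_summable0 hvw
  have hSvD := disc_summableD hv
  have hSwD := disc_summableD hw
  have hSvwD := disc_summableD hvw
  -- abbreviations
  set Dv := ∑' k : ℤ, ‖v (k + 1) - v k‖ ^ 2 with hDv
  set Dw := ∑' k : ℤ, ‖w (k + 1) - w k‖ ^ 2 with hDw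
  set Dp := ∑' k : ℤ, ‖v (k + 1) * w (k + 1) - v k * w k‖ ^ 2 with hDp
  set Sv := ∑' k : ℤ, ‖v k‖ ^ 2 with hSv
  set Sw := ∑' k : ℤ, ‖w k‖ ^ 2 with hSw
  set Sp := ∑' k : ℤ, ‖v k * w k‖ ^ 2 with hSp
  have hDv0 : 0 ≤ Dv := tsum_nonneg fun k => by positivity
  have hDw0 : 0 ≤ Dw := tsum_nonneg fun k => by positivity
  have hSv0' : 0 ≤ Sv := tsum_nonneg fun k => by positivity
  have hSw0' : 0 ≤ Sw := tsum_nonneg fun k => by positivity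
  set Nv := discNormSq δx v with hNvdef
  set Nw := discNormSq δx w with hNwdef
  have hNv : Nv = 2 * δx * (Dv / δx ^ 2) + δx * Sv := by
    rw [hNvdef, discNormSq, tsum_div_const]
  have hNw : Nw = 2 * δx * (Dw / δx ^ 2) + δx * Sw := by
    rw [hNwdef, discNormSq, tsum_div_const]
  have hNvw : discNormSq δx (fun j => v j * w j) = 2 * δx * (Dp / δx ^ 2) + δx * Sp := by
    rw [discNormSq, tsum_div_const]
  have hNv_nn : 0 ≤ Nv := by rw [hNv]; positivity
  have hNw_nn : 0 ≤ Nw := by rw [hNw]; positivity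
  -- sup bounds
  have hMv : ∀ j : ℤ, ‖v j‖ ^ 2 ≤ Nv := by
    intro j
    have h := disc_sup_bound hv (ε := δx / 4) (by positivity) j
    rw [← hDv, ← hSv] at h
    have e1 : 1 / (2 * (δx / 4)) * Dv = 2 * δx * (Dv / δx ^ 2) := by
      field_simp; ring
    rw [e1] at h
    rw [hNv]
    nlinarith [mul_nonneg hδ.le hSv0']
  have hMw : ∀ j : ℤ, ‖w j‖ ^ 2 ≤ Nw := by
    intro j
    have h := disc_sup_bound hw (ε := δx / 4) (by positivity) j
    rw [← hDw, ← hSw] at h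
    have e1 : 1 / (2 * (δx / 4)) * Dw = 2 * δx * (Dw / δx ^ 2) := by
      field_simp; ring
    rw [e1] at h
    rw [hNw]
    nlinarith [mul_nonneg hδ.le hSw0']
  -- Leibniz pointwise bounds
  have hptD : ∀ j : ℤ, ‖v (j + 1) * w (j + 1) - v j * w j‖ ^ 2 ≤
      2 * Nv * ‖w (j + 1) - w j‖ ^ 2 + 2 * Nw * ‖v (j + 1) - v j‖ ^ 2 := by
    intro j
    have e : v (j + 1) * w (j + 1) - v j * w j
        = v (j + 1) * (w (j + 1) - w j) + (v (j + 1) - v j) * w j := by ring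
    have h1 : ‖v (j + 1) * w (j + 1) - v j * w j‖ ≤
        ‖v (j + 1)‖ * ‖w (j + 1) - w j‖
          + ‖v (j + 1) - v j‖ * ‖w j‖ := by
      rw [e]
      refine le_trans (norm_add_le _ _) ?_
      rw [norm_mul, norm_mul]
    have h2 : ‖v (j + 1) * w (j + 1) - v j * w j‖ ^ 2 ≤
        (‖v (j + 1)‖ * ‖w (j + 1) - w j‖
          + ‖v (j + 1) - v j‖ * ‖w j‖) ^ 2 :=
      pow_le_pow_left₀ (norm_nonneg _) h1 2
    nlinarith [h2, sq_nonneg (‖v (j + 1)‖ * ‖w (j + 1) - w j‖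
        - ‖v (j + 1) - v j‖ * ‖w j‖),
      mul_le_mul_of_nonneg_right (hMv (j + 1)) (sq_nonneg (‖w (j + 1) - w j‖)),
      mul_le_mul_of_nonneg_right (hMw j) (sq_nonneg (‖v (j + 1) - v j‖))]
  have hpt0 : ∀ j : ℤ, ‖v j * w j‖ ^ 2 ≤ Nv * ‖w j‖ ^ 2 := by
    intro j
    rw [norm_mul, mul_pow]
    exact mul_le_mul_of_nonneg_right (hMv j) (sq_nonneg _)
  -- sum the bounds
  have hDsum : Dp ≤ 2 * Nv * Dw + 2 * Nw * Dv := by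
    calc Dp ≤ ∑' j : ℤ, (2 * Nv * ‖w (j + 1) - w j‖ ^ 2
          + 2 * Nw * ‖v (j + 1) - v j‖ ^ 2) :=
        Summable.tsum_le_tsum hptD hSvwD ((hSwD.mul_left _).add (hSvD.mul_left _))
      _ = 2 * Nv * Dw + 2 * Nw * Dv := by
        rw [Summable.tsum_add (hSwD.mul_left _) (hSvD.mul_left _), tsum_mul_left, tsum_mul_left]
  have h0sum : Sp ≤ Nv * Sw := by
    calc Sp ≤ ∑' j : ℤ, Nv * ‖w j‖ ^ 2 :=
        Summable.tsum_le_tsum hpt0 hSvw0 (hSw0.mul_left _)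
      _ = Nv * Sw := tsum_mul_left
  -- combine
  have hBw : 2 * δx * (Dw / δx ^ 2) ≤ Nw := by
    rw [hNw]; nlinarith [mul_nonneg hδ.le hSw0']
  have hBv : 2 * δx * (Dv / δx ^ 2) ≤ Nv := by
    rw [hNv]; nlinarith [mul_nonneg hδ.le hSv0']
  have hBw2 : δx * Sw ≤ Nw := by
    rw [hNw]
    nlinarith [mul_nonneg (by positivity : (0:ℝ) ≤ 2 * δx)
      (by positivity : (0:ℝ) ≤ Dw / δx ^ 2)]
  have hA : 2 * δx * (Dp / δx ^ 2) ≤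
      2 * Nv * (2 * δx * (Dw / δx ^ 2)) + 2 * Nw * (2 * δx * (Dv / δx ^ 2)) := by
    have hc : (0:ℝ) < 2 * δx / δx ^ 2 := by positivity
    have h := mul_le_mul_of_nonneg_left hDsum hc.le
    have e1 : 2 * δx * (Dp / δx ^ 2) = 2 * δx / δx ^ 2 * Dp := by ring
    have e2 : 2 * Nv * (2 * δx * (Dw / δx ^ 2)) + 2 * Nw * (2 * δx * (Dv / δx ^ 2))
        = 2 * δx / δx ^ 2 * (2 * Nv * Dw + 2 * Nw * Dv) := by ring
    rw [e1, e2]; exact h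
  have hC : δx * Sp ≤ Nv * (δx * Sw) := by
    have h := mul_le_mul_of_nonneg_left h0sum hδ.le
    calc δx * Sp ≤ δx * (Nv * Sw) := h
      _ = Nv * (δx * Sw) := by ring
  have hmain : discNormSq δx (fun j => v j * w j) ≤ 9 * (Nv * Nw) := by
    rw [hNvw]
    have t1 : 2 * Nv * (2 * δx * (Dw / δx ^ 2)) ≤ 2 * Nv * Nw :=
      mul_le_mul_of_nonneg_left hBw (by linarith)
    have t2 : 2 * Nw * (2 * δx * (Dv / δx ^ 2)) ≤ 2 * Nw * Nv :=
      mul_le_mul_of_nonneg_left hBv (by linarith)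
    have t3 : Nv * (δx * Sw) ≤ Nv * Nw := mul_le_mul_of_nonneg_left hBw2 hNv_nn
    nlinarith [hA, hC, t1, t2, t3]
  calc Real.sqrt (discNormSq δx (fun j => v j * w j)) ≤ Real.sqrt (9 * (Nv * Nw)) :=
      Real.sqrt_le_sqrt hmain
    _ = 3 * Real.sqrt Nv * Real.sqrt Nw := by
      rw [Real.sqrt_mul (by norm_num : (0:ℝ) ≤ 9), Real.sqrt_mul hNv_nn,
        show Real.sqrt 9 = 3 by rw [show (9:ℝ) = 3 ^ 2 by norm_num, Real.sqrt_sq (by norm_num)]]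
      ring
end

section
/- Let X and Y be polynomial vector fields on ℝ^n of degrees s₁ and s₂ respectively, with multilinear norms ‖X‖ and ‖Y‖ defined as the supremum of ‖X̃(ψ₁,…,ψ_{s})‖ over unit vectors (X̃ being the polarized symmetric multilinear form). Then the Lie bracket [X,Y] is a polynomial vector field of degree at most s₁+s₂-1 and satisfies ‖[X,Y]‖ ≤ (s₁+s₂)‖X‖‖Y‖. -/
open Function

section Aux

variable {E : Type*} [NormedAddCommGroup E] [NormedSpace ℝ E]

private lemma natAdd_inj (s k : ℕ) : Function.Injective (Fin.natAdd s : Fin k → Fin (s + k)) := by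
  intro a b h
  have := congrArg Fin.val h
  simp only [Fin.coe_natAdd] at this
  exact Fin.ext (by omega)

/-- Composition multilinear map: plug `BY` into the first slot of `BX`. -/
def compVF (k s₂ : ℕ)
    (BX : MultilinearMap ℝ (fun _ : Fin (k+1) => E) E)
    (BY : MultilinearMap ℝ (fun _ : Fin s₂ => E) E) :
    MultilinearMap ℝ (fun _ : Fin (s₂ + k) => E) E where
  toFun ψ := BX (Fin.cons (BY fun j => ψ (Fin.castAdd k j)) (fun j => ψ (Fin.natAdd s₂ j)))
  map_update_add' := by
    intro dec ψ i x y
    rcases lt_or_ge (i : ℕ) s₂ with h | h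
    · obtain ⟨j₀, rfl⟩ : ∃ j₀ : Fin s₂, i = Fin.castAdd k j₀ :=
        ⟨⟨i, h⟩, Fin.ext (by simp)⟩
      have hfix : ∀ z : E, (fun j => Function.update ψ (Fin.castAdd k j₀) z (Fin.natAdd s₂ j))
          = fun j => ψ (Fin.natAdd s₂ j) := by
        intro z; funext j
        refine Function.update_of_ne ?_ _ _
        simp only [ne_eq, Fin.ext_iff, Fin.coe_natAdd, Fin.coe_castAdd]
        omega
      have hupd : ∀ z : E, (fun j => Function.update ψ (Fin.castAdd k j₀) z (Fin.castAdd k j))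
          = Function.update (fun j => ψ (Fin.castAdd k j)) j₀ z := fun z =>
        Function.update_comp_eq_of_injective' ψ (Fin.castAdd_injective _ _) j₀ z
      simp only [hfix, hupd, MultilinearMap.map_update_add]
      exact BX.cons_add _ _ _
    · obtain ⟨j₀, rfl⟩ : ∃ j₀ : Fin k, i = Fin.natAdd s₂ j₀ :=
        ⟨⟨(i : ℕ) - s₂, by omega⟩, Fin.ext (by simp; omega)⟩
      have hfix : ∀ z : E, (fun j => Function.update ψ (Fin.natAdd s₂ j₀) z (Fin.castAdd k j))
          = fun j => ψ (Fin.castAdd k j) := by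
        intro z; funext j
        refine Function.update_of_ne ?_ _ _
        simp only [ne_eq, Fin.ext_iff, Fin.coe_natAdd, Fin.coe_castAdd]
        omega
      have hupd : ∀ z : E, (fun j => Function.update ψ (Fin.natAdd s₂ j₀) z (Fin.natAdd s₂ j))
          = Function.update (fun j => ψ (Fin.natAdd s₂ j)) j₀ z := fun z =>
        Function.update_comp_eq_of_injective' ψ (natAdd_inj s₂ k) j₀ z
      simp only [hfix, hupd, Fin.cons_update]
      exact BX.map_update_add _ _ _ _
  map_update_smul' := by
    intro dec ψ i c x
    rcases lt_or_ge (i : ℕ) s₂ with h | h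
    · obtain ⟨j₀, rfl⟩ : ∃ j₀ : Fin s₂, i = Fin.castAdd k j₀ :=
        ⟨⟨i, h⟩, Fin.ext (by simp)⟩
      have hfix : ∀ z : E, (fun j => Function.update ψ (Fin.castAdd k j₀) z (Fin.natAdd s₂ j))
          = fun j => ψ (Fin.natAdd s₂ j) := by
        intro z; funext j
        refine Function.update_of_ne ?_ _ _
        simp only [ne_eq, Fin.ext_iff, Fin.coe_natAdd, Fin.coe_castAdd]
        omega
      have hupd : ∀ z : E, (fun j => Function.update ψ (Fin.castAdd k j₀) z (Fin.castAdd k j))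
          = Function.update (fun j => ψ (Fin.castAdd k j)) j₀ z := fun z =>
        Function.update_comp_eq_of_injective' ψ (Fin.castAdd_injective _ _) j₀ z
      simp only [hfix, hupd, MultilinearMap.map_update_smul]
      exact BX.cons_smul _ _ _
    · obtain ⟨j₀, rfl⟩ : ∃ j₀ : Fin k, i = Fin.natAdd s₂ j₀ :=
        ⟨⟨(i : ℕ) - s₂, by omega⟩, Fin.ext (by simp; omega)⟩
      have hfix : ∀ z : E, (fun j => Function.update ψ (Fin.natAdd s₂ j₀) z (Fin.castAdd k j))
          = fun j => ψ (Fin.castAdd k j) := by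
        intro z; funext j
        refine Function.update_of_ne ?_ _ _
        simp only [ne_eq, Fin.ext_iff, Fin.coe_natAdd, Fin.coe_castAdd]
        omega
      have hupd : ∀ z : E, (fun j => Function.update ψ (Fin.natAdd s₂ j₀) z (Fin.natAdd s₂ j))
          = Function.update (fun j => ψ (Fin.natAdd s₂ j)) j₀ z := fun z =>
        Function.update_comp_eq_of_injective' ψ (natAdd_inj s₂ k) j₀ z
      simp only [hfix, hupd, Fin.cons_update]
      exact BX.map_update_smul _ _ _ _

@[simp] lemma compVF_apply (k s₂ : ℕ)
    (BX : MultilinearMap ℝ (fun _ : Fin (k+1) => E) E)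
    (BY : MultilinearMap ℝ (fun _ : Fin s₂ => E) E) (ψ : Fin (s₂ + k) → E) :
    compVF k s₂ BX BY ψ
      = BX (Fin.cons (BY fun j => ψ (Fin.castAdd k j)) (fun j => ψ (Fin.natAdd s₂ j))) := rfl

lemma compVF_bound (k s₂ : ℕ) (CX CY : ℝ) (hCX0 : 0 ≤ CX)
    (BX : MultilinearMap ℝ (fun _ : Fin (k+1) => E) E)
    (BY : MultilinearMap ℝ (fun _ : Fin s₂ => E) E)
    (hCX : ∀ ψ : Fin (k+1) → E, ‖BX ψ‖ ≤ CX * ∏ i, ‖ψ i‖)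
    (hCY : ∀ ψ : Fin s₂ → E, ‖BY ψ‖ ≤ CY * ∏ i, ‖ψ i‖)
    (ψ : Fin (s₂ + k) → E) :
    ‖compVF k s₂ BX BY ψ‖ ≤ CX * CY * ∏ i, ‖ψ i‖ := by
  have hsplit : ∏ i, ‖ψ i‖
      = (∏ j : Fin s₂, ‖ψ (Fin.castAdd k j)‖) * ∏ j : Fin k, ‖ψ (Fin.natAdd s₂ j)‖ :=
    Fin.prod_univ_add (fun i => ‖ψ i‖)
  rw [compVF_apply]
  calc ‖BX (Fin.cons (BY fun j => ψ (Fin.castAdd k j)) (fun j => ψ (Fin.natAdd s₂ j)))‖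
      ≤ CX * ∏ i : Fin (k+1),
          ‖(Fin.cons (BY fun j => ψ (Fin.castAdd k j)) (fun j => ψ (Fin.natAdd s₂ j)) : Fin (k+1) → E) i‖ := hCX _
    _ = CX * (‖BY fun j => ψ (Fin.castAdd k j)‖ * ∏ j : Fin k, ‖ψ (Fin.natAdd s₂ j)‖) := by
        rw [Fin.prod_univ_succ]
        simp [Fin.cons_succ]
    _ ≤ CX * ((CY * ∏ j : Fin s₂, ‖ψ (Fin.castAdd k j)‖) * ∏ j : Fin k, ‖ψ (Fin.natAdd s₂ j)‖) := by
        have h := hCY (fun j => ψ (Fin.castAdd k j))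
        have hp : (0:ℝ) ≤ ∏ j : Fin k, ‖ψ (Fin.natAdd s₂ j)‖ :=
          Finset.prod_nonneg fun _ _ => norm_nonneg _
        exact mul_le_mul_of_nonneg_left (mul_le_mul_of_nonneg_right h hp) hCX0
    _ = CX * CY * ∏ i, ‖ψ i‖ := by rw [hsplit]; ring

noncomputable def symmetrize {m : ℕ} (f : MultilinearMap ℝ (fun _ : Fin m => E) E) :
    MultilinearMap ℝ (fun _ : Fin m => E) E :=
  ((Nat.factorial m : ℝ))⁻¹ • ∑ σ : Equiv.Perm (Fin m), MultilinearMap.domDomCongr σ f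

lemma symmetrize_apply {m : ℕ} (f : MultilinearMap ℝ (fun _ : Fin m => E) E)
    (ψ : Fin m → E) :
    symmetrize f ψ = ((Nat.factorial m : ℝ))⁻¹ •
      ∑ σ : Equiv.Perm (Fin m), f (fun i => ψ (σ i)) := by
  simp [symmetrize, MultilinearMap.sum_apply]

lemma symmetrize_symm {m : ℕ} (f : MultilinearMap ℝ (fun _ : Fin m => E) E)
    (τ : Equiv.Perm (Fin m)) (ψ : Fin m → E) :
    symmetrize f (fun i => ψ (τ i)) = symmetrize f ψ := by
  rw [symmetrize_apply, symmetrize_apply]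
  congr 1
  refine Fintype.sum_equiv (Equiv.mulLeft τ) _ _ fun σ => ?_
  congr 1

lemma symmetrize_diag {m : ℕ} (f : MultilinearMap ℝ (fun _ : Fin m => E) E) (u : E) :
    symmetrize f (fun _ => u) = f (fun _ => u) := by
  rw [symmetrize_apply]
  simp only [Finset.sum_const, Finset.card_univ, Fintype.card_perm, Fintype.card_fin]
  rw [← Nat.cast_smul_eq_nsmul ℝ, smul_smul,
    inv_mul_cancel₀ (by exact_mod_cast Nat.factorial_ne_zero m), one_smul]

lemma symmetrize_bound {m : ℕ} (f : MultilinearMap ℝ (fun _ : Fin m => E) E) (C : ℝ)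
    (hC : ∀ ψ : Fin m → E, ‖f ψ‖ ≤ C * ∏ i, ‖ψ i‖) (ψ : Fin m → E) :
    ‖symmetrize f ψ‖ ≤ C * ∏ i, ‖ψ i‖ := by
  rw [symmetrize_apply, norm_smul]
  have h1 : ‖∑ σ : Equiv.Perm (Fin m), f (fun i => ψ (σ i))‖
      ≤ (Nat.factorial m : ℝ) * (C * ∏ i, ‖ψ i‖) := by
    calc ‖∑ σ : Equiv.Perm (Fin m), f (fun i => ψ (σ i))‖
        ≤ ∑ σ : Equiv.Perm (Fin m), ‖f (fun i => ψ (σ i))‖ := norm_sum_le _ _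
      _ ≤ ∑ _σ : Equiv.Perm (Fin m), (C * ∏ i, ‖ψ i‖) := by
          refine Finset.sum_le_sum fun σ _ => ?_
          calc ‖f (fun i => ψ (σ i))‖ ≤ C * ∏ i, ‖ψ (σ i)‖ := hC _
            _ = C * ∏ i, ‖ψ i‖ := by rw [Equiv.prod_comp σ (fun i => ‖ψ i‖)]
      _ = (Nat.factorial m : ℝ) * (C * ∏ i, ‖ψ i‖) := by
          simp [Finset.sum_const, Fintype.card_perm]
  calc ‖((Nat.factorial m : ℝ))⁻¹‖ * ‖∑ σ : Equiv.Perm (Fin m), f (fun i => ψ (σ i))‖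
      ≤ ((Nat.factorial m : ℝ))⁻¹ * ((Nat.factorial m : ℝ) * (C * ∏ i, ‖ψ i‖)) := by
        rw [norm_inv, Real.norm_natCast]
        exact mul_le_mul_of_nonneg_left h1 (by positivity)
    _ = C * ∏ i, ‖ψ i‖ := by
        rw [← mul_assoc, inv_mul_cancel₀ (by exact_mod_cast Nat.factorial_ne_zero m), one_mul]

lemma fderiv_diag {s : ℕ} (B : MultilinearMap ℝ (fun _ : Fin s => E) E) (C : ℝ)
    (hC : ∀ ψ : Fin s → E, ‖B ψ‖ ≤ C * ∏ i, ‖ψ i‖) (X : E → E)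
    (hX : ∀ u, X u = B fun _ => u) (u v : E) :
    fderiv ℝ X u v = ∑ i : Fin s, B (Function.update (fun _ => u) i v) := by
  set Bc : ContinuousMultilinearMap ℝ (fun _ : Fin s => E) E := B.mkContinuous C hC with hBc
  have hBcapp : ∀ ψ : Fin s → E, Bc ψ = B ψ := fun ψ => rfl
  set D : E →L[ℝ] (Fin s → E) := ContinuousLinearMap.pi fun _ => ContinuousLinearMap.id ℝ E
    with hD
  have hXeq : X = fun w => Bc (fun _ => w) := funext fun w => by rw [hX w, hBcapp]
  have hXd : HasFDerivAt X ((Bc.linearDeriv (fun _ => u)).comp D) u := by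
    rw [hXeq]
    exact (Bc.hasFDerivAt (x := fun _ => u)).comp u D.hasFDerivAt
  rw [hXd.fderiv]
  have : D v = fun _ : Fin s => v := rfl
  rw [ContinuousLinearMap.comp_apply, this, ContinuousMultilinearMap.linearDeriv_apply]
  rfl

omit [NormedAddCommGroup E] [NormedSpace ℝ E] in
lemma fin_const_eq_cons {s : ℕ} (u : E) :
    (fun _ : Fin (s+1) => u) = Fin.cons u (fun _ => u) :=
  funext fun j => (Fin.cases rfl (fun _ => rfl) j)

lemma sum_update_const {s : ℕ} (B : MultilinearMap ℝ (fun _ : Fin (s+1) => E) E)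
    (hsym : ∀ (σ : Equiv.Perm (Fin (s+1))) (m : Fin (s+1) → E),
      B (fun i => m (σ i)) = B m) (u v : E) :
    ∑ i : Fin (s+1), B (Function.update (fun _ => u) i v)
      = (s+1 : ℕ) • B (Fin.cons v fun _ => u) := by
  have h : ∀ i : Fin (s+1), B (Function.update (fun _ => u) i v)
      = B (Fin.cons v fun _ => u) := by
    intro i
    have key : (fun j => (Function.update (fun _ : Fin (s+1) => u) i v) ((Equiv.swap 0 i) j))
        = Function.update (fun _ : Fin (s+1) => u) 0 v := by
      funext j
      rcases eq_or_ne j 0 with rfl | hj0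
      · rw [Equiv.swap_apply_left, Function.update_self, Function.update_self]
      · rw [Function.update_of_ne hj0]
        rcases eq_or_ne j i with rfl | hji
        · rw [Equiv.swap_apply_right, Function.update_of_ne (Ne.symm hj0)]
        · rw [Equiv.swap_apply_of_ne_of_ne hj0 hji, Function.update_of_ne hji]
    have h2 : Function.update (fun _ : Fin (s+1) => u) 0 v = Fin.cons v (fun _ => u) := by
      rw [fin_const_eq_cons u, Fin.update_cons_zero]
    rw [← hsym (Equiv.swap 0 i) (Function.update (fun _ => u) i v), key, h2]
  rw [Finset.sum_congr rfl fun i _ => h i]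
  simp

end Aux

/-- Let `X, Y` be homogeneous polynomial vector fields on `ℝⁿ` of degrees
`s₁, s₂`, given by symmetric multilinear maps `BX, BY` with multilinear norms bounded by
`CX, CY`. Then the Lie bracket `[X,Y](u) = DX(u)·Y(u) - DY(u)·X(u)` is a polynomial vector
field of degree at most `s₁ + s₂ - 1` whose multilinear norm is at most `(s₁+s₂) CX CY`,
uniformly in the dimension `n`. -/
theorem stmt_11 (n s₁ s₂ : ℕ) (h₁ : 1 ≤ s₁) (h₂ : 1 ≤ s₂) (CX CY : ℝ)
    (hCX0 : 0 ≤ CX) (hCY0 : 0 ≤ CY)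
    (BX : MultilinearMap ℝ (fun _ : Fin s₁ => EuclideanSpace ℝ (Fin n))
      (EuclideanSpace ℝ (Fin n)))
    (BY : MultilinearMap ℝ (fun _ : Fin s₂ => EuclideanSpace ℝ (Fin n))
      (EuclideanSpace ℝ (Fin n)))
    (hBXsym : ∀ (σ : Equiv.Perm (Fin s₁)) (m : Fin s₁ → EuclideanSpace ℝ (Fin n)),
      BX (fun i => m (σ i)) = BX m)
    (hBYsym : ∀ (σ : Equiv.Perm (Fin s₂)) (m : Fin s₂ → EuclideanSpace ℝ (Fin n)),
      BY (fun i => m (σ i)) = BY m)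
    (hCX : ∀ ψ : Fin s₁ → EuclideanSpace ℝ (Fin n), ‖BX ψ‖ ≤ CX * ∏ i, ‖ψ i‖)
    (hCY : ∀ ψ : Fin s₂ → EuclideanSpace ℝ (Fin n), ‖BY ψ‖ ≤ CY * ∏ i, ‖ψ i‖)
    (X Y : EuclideanSpace ℝ (Fin n) → EuclideanSpace ℝ (Fin n))
    (hX : ∀ u, X u = BX (fun _ => u)) (hY : ∀ u, Y u = BY (fun _ => u)) :
    ∃ BZ : MultilinearMap ℝ (fun _ : Fin (s₁ + s₂ - 1) => EuclideanSpace ℝ (Fin n))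
        (EuclideanSpace ℝ (Fin n)),
      (∀ (σ : Equiv.Perm (Fin (s₁ + s₂ - 1))) (m : Fin (s₁ + s₂ - 1) → EuclideanSpace ℝ (Fin n)),
        BZ (fun i => m (σ i)) = BZ m) ∧
      (∀ u : EuclideanSpace ℝ (Fin n),
        BZ (fun _ => u) = fderiv ℝ X u (Y u) - fderiv ℝ Y u (X u)) ∧
      (∀ ψ : Fin (s₁ + s₂ - 1) → EuclideanSpace ℝ (Fin n),
        ‖BZ ψ‖ ≤ (s₁ + s₂ : ℝ) * CX * CY * ∏ i, ‖ψ i‖) := by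
  obtain ⟨k, rfl⟩ : ∃ k, s₁ = k + 1 := ⟨s₁ - 1, by omega⟩
  obtain ⟨l, rfl⟩ : ∃ l, s₂ = l + 1 := ⟨s₂ - 1, by omega⟩
  have hm1 : (l + 1) + k = (k + 1) + (l + 1) - 1 := by omega
  have hm2 : (k + 1) + l = (k + 1) + (l + 1) - 1 := by omega
  set e₁ : Fin ((l+1) + k) ≃ Fin ((k+1) + (l+1) - 1) := finCongr hm1 with he₁
  set e₂ : Fin ((k+1) + l) ≃ Fin ((k+1) + (l+1) - 1) := finCongr hm2 with he₂
  set W : MultilinearMap ℝ (fun _ : Fin ((k+1)+(l+1)-1) => EuclideanSpace ℝ (Fin n))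
      (EuclideanSpace ℝ (Fin n)) :=
    ((k+1 : ℕ) : ℝ) • MultilinearMap.domDomCongr e₁ (compVF k (l+1) BX BY)
    - ((l+1 : ℕ) : ℝ) • MultilinearMap.domDomCongr e₂ (compVF l (k+1) BY BX) with hW
  have hWapp : ∀ ψ : Fin ((k+1)+(l+1)-1) → EuclideanSpace ℝ (Fin n),
      W ψ = ((k+1:ℕ):ℝ) • (compVF k (l+1) BX BY) (fun i => ψ (e₁ i))
        - ((l+1:ℕ):ℝ) • (compVF l (k+1) BY BX) (fun i => ψ (e₂ i)) := fun ψ => rfl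
  have hWdiag : ∀ u : EuclideanSpace ℝ (Fin n),
      W (fun _ => u) = fderiv ℝ X u (Y u) - fderiv ℝ Y u (X u) := by
    intro u
    have hfX : fderiv ℝ X u (Y u) = ((k+1:ℕ):ℝ) • BX (Fin.cons (Y u) fun _ => u) := by
      rw [fderiv_diag BX CX hCX X hX u (Y u), sum_update_const BX hBXsym u (Y u),
        Nat.cast_smul_eq_nsmul]
    have hfY : fderiv ℝ Y u (X u) = ((l+1:ℕ):ℝ) • BY (Fin.cons (X u) fun _ => u) := by
      rw [fderiv_diag BY CY hCY Y hY u (X u), sum_update_const BY hBYsym u (X u),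
        Nat.cast_smul_eq_nsmul]
    rw [hWapp, hfX, hfY]
    have c1 : (compVF k (l+1) BX BY)
          (fun i => (fun _ : Fin ((k+1)+(l+1)-1) => u) (e₁ i))
        = BX (Fin.cons (Y u) fun _ => u) := by
      rw [compVF_apply, ← hY u]
    have c2 : (compVF l (k+1) BY BX)
          (fun i => (fun _ : Fin ((k+1)+(l+1)-1) => u) (e₂ i))
        = BY (Fin.cons (X u) fun _ => u) := by
      rw [compVF_apply, ← hX u]
    rw [c1, c2]
  have hWbound : ∀ ψ : Fin ((k+1)+(l+1)-1) → EuclideanSpace ℝ (Fin n),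
      ‖W ψ‖ ≤ ((((k+1:ℕ):ℝ) + ((l+1:ℕ):ℝ)) * CX * CY) * ∏ i, ‖ψ i‖ := by
    intro ψ
    rw [hWapp]
    have p1 : (∏ i, ‖ψ (e₁ i)‖) = ∏ i, ‖ψ i‖ := Equiv.prod_comp e₁ (fun i => ‖ψ i‖)
    have p2 : (∏ i, ‖ψ (e₂ i)‖) = ∏ i, ‖ψ i‖ := Equiv.prod_comp e₂ (fun i => ‖ψ i‖)
    have b1 : ‖(compVF k (l+1) BX BY) (fun i => ψ (e₁ i))‖ ≤ CX * CY * ∏ i, ‖ψ i‖ := by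
      have := compVF_bound k (l+1) CX CY hCX0 BX BY hCX hCY (fun i => ψ (e₁ i))
      rwa [p1] at this
    have b2 : ‖(compVF l (k+1) BY BX) (fun i => ψ (e₂ i))‖ ≤ CX * CY * ∏ i, ‖ψ i‖ := by
      have := compVF_bound l (k+1) CY CX hCY0 BY BX hCY hCX (fun i => ψ (e₂ i))
      rw [p2, mul_comm CY CX] at this
      exact this
    calc ‖((k+1:ℕ):ℝ) • (compVF k (l+1) BX BY) (fun i => ψ (e₁ i))
          - ((l+1:ℕ):ℝ) • (compVF l (k+1) BY BX) (fun i => ψ (e₂ i))‖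
        ≤ ‖((k+1:ℕ):ℝ) • (compVF k (l+1) BX BY) (fun i => ψ (e₁ i))‖
          + ‖((l+1:ℕ):ℝ) • (compVF l (k+1) BY BX) (fun i => ψ (e₂ i))‖ := norm_sub_le _ _
      _ ≤ ((k+1:ℕ):ℝ) * (CX * CY * ∏ i, ‖ψ i‖) + ((l+1:ℕ):ℝ) * (CX * CY * ∏ i, ‖ψ i‖) := by
          gcongr ?_ + ?_
          · rw [norm_smul, Real.norm_natCast]
            exact mul_le_mul_of_nonneg_left b1 (by positivity)
          · rw [norm_smul, Real.norm_natCast]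
            exact mul_le_mul_of_nonneg_left b2 (by positivity)
      _ = ((((k+1:ℕ):ℝ) + ((l+1:ℕ):ℝ)) * CX * CY) * ∏ i, ‖ψ i‖ := by ring
  refine ⟨symmetrize W, fun σ m => symmetrize_symm W σ m, fun u => by
    rw [symmetrize_diag W u, hWdiag u], fun ψ => ?_⟩
  have h := symmetrize_bound W ((((k+1:ℕ):ℝ) + ((l+1:ℕ):ℝ)) * CX * CY) hWbound ψ
  exact h
end

section
/- The implicit midpoint rule u^{n+1} = u^n + (ih/2)A(u^{n+1} + u^n) + ih·f((u^{n+1}+u^n)/2), with f(u)_ℓ = λ|u_ℓ|^{2r}u_ℓ, preserves the discrete L² norm: N(u^{n+1}) = N(u^n), where N(u) = δx Σ_ℓ |u_ℓ|². -/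
/-- The nonlinearity `f(u)_ℓ = λ |u_ℓ|^{2r} u_ℓ`. -/
noncomputable def fNL (n r : ℕ) (lam : ℝ) (w : Fin n → ℂ) : Fin n → ℂ :=
  fun ℓ => (lam : ℂ) * (‖w ℓ‖ : ℂ) ^ (2 * r) * w ℓ

/-- the implicit midpoint rule
`u⁺ = u + (ih/2)A(u⁺ + u) + ih f((u⁺ + u)/2)` preserves the discrete L² norm
`N(u) = δx Σ_ℓ |u_ℓ|²`. -/
theorem stmt_17 (n : ℕ) (δx h : ℝ) (hδ : 0 < δx) (hh : 0 < h)
    (r : ℕ) (hr : 1 ≤ r) (lam : ℝ) (hlam : lam = 1 ∨ lam = -1)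
    (A : Matrix (Fin n) (Fin n) ℝ) (hA : A.IsSymm)
    (u v : Fin n → ℂ)
    (hmid : v = u + (Complex.I * (h : ℂ) / 2) • (A.map Complex.ofReal).mulVec (v + u)
      + (Complex.I * (h : ℂ)) • fNL n r lam ((1 / 2 : ℂ) • (v + u))) :
    δx * ∑ ℓ, ‖v ℓ‖ ^ 2 = δx * ∑ ℓ, ‖u ℓ‖ ^ 2 := by
  have hvu : v - u = (Complex.I * (h:ℂ) / 2) • (A.map Complex.ofReal).mulVec (v + u)
      + (Complex.I * (h:ℂ)) • fNL n r lam ((1/2:ℂ) • (v + u)) := by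
    conv_lhs => rw [hmid]
    abel
  set w : Fin n → ℂ := v + u with hw
  set Q : ℂ := ∑ ℓ, (A.map Complex.ofReal).mulVec w ℓ * (starRingEnd ℂ) (w ℓ) with hQdef
  set P : ℂ := ∑ ℓ, fNL n r lam ((1/2:ℂ) • w) ℓ * (starRingEnd ℂ) (w ℓ) with hPdef
  have expand : ∀ ℓ, (A.map Complex.ofReal).mulVec w ℓ * (starRingEnd ℂ) (w ℓ)
      = ∑ k, (A ℓ k : ℂ) * w k * (starRingEnd ℂ) (w ℓ) := by
    intro ℓ
    simp [Matrix.mulVec, dotProduct, Finset.sum_mul, Matrix.map_apply]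
  have hQ : Q.im = 0 := by
    have hc : (starRingEnd ℂ) Q = Q := by
      rw [hQdef, map_sum]
      calc ∑ ℓ, (starRingEnd ℂ) ((A.map Complex.ofReal).mulVec w ℓ * (starRingEnd ℂ) (w ℓ))
          = ∑ ℓ, ∑ k, (A ℓ k : ℂ) * (starRingEnd ℂ) (w k) * w ℓ := by
            refine Finset.sum_congr rfl fun ℓ _ => ?_
            rw [expand ℓ, map_sum]
            refine Finset.sum_congr rfl fun k _ => ?_
            simp only [map_mul, Complex.conj_ofReal, RingHomCompTriple.comp_apply,
              Complex.conj_conj, RingHom.id_apply]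
        _ = ∑ k, ∑ ℓ, (A ℓ k : ℂ) * (starRingEnd ℂ) (w k) * w ℓ := Finset.sum_comm
        _ = ∑ ℓ, (A.map Complex.ofReal).mulVec w ℓ * (starRingEnd ℂ) (w ℓ) := by
            refine Finset.sum_congr rfl fun k _ => ?_
            rw [expand k]
            refine Finset.sum_congr rfl fun ℓ _ => ?_
            have hsym : A ℓ k = A k ℓ := by
              have h2 := congrFun (congrFun hA ℓ) k
              simpa [Matrix.transpose_apply] using h2.symm
            rw [hsym]; ring
    exact Complex.conj_eq_iff_im.mp hc
  have hP : P.im = 0 := by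
    rw [hPdef, Complex.im_sum]
    refine Finset.sum_eq_zero fun ℓ _ => ?_
    have heq : fNL n r lam ((1/2:ℂ) • w) ℓ * (starRingEnd ℂ) (w ℓ)
        = ((lam * (‖(1/2:ℂ) * w ℓ‖) ^ (2*r) / 2 * Complex.normSq (w ℓ) : ℝ) : ℂ) := by
      simp only [fNL, Pi.smul_apply, smul_eq_mul]
      rw [show ((lam:ℂ) * (‖(1/2:ℂ) * w ℓ‖ : ℂ) ^ (2*r) * ((1/2:ℂ) * w ℓ))
          * (starRingEnd ℂ) (w ℓ)
          = (lam:ℂ) * (‖(1/2:ℂ) * w ℓ‖ : ℂ) ^ (2*r) / 2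
            * (w ℓ * (starRingEnd ℂ) (w ℓ)) by ring]
      rw [Complex.mul_conj]
      push_cast
      ring
    rw [heq, Complex.ofReal_im]
  have h1 : ∀ ℓ, ‖v ℓ‖^2 - ‖u ℓ‖^2
      = ((v ℓ - u ℓ) * (starRingEnd ℂ) (w ℓ)).re := by
    intro ℓ
    rw [Complex.sq_norm, Complex.sq_norm]
    simp [hw, Pi.add_apply, Complex.normSq_apply, Complex.mul_re, Complex.sub_re,
      Complex.add_re, Complex.sub_im, Complex.add_im, Complex.conj_re, Complex.conj_im]
    ring
  have key : ∑ ℓ, ‖v ℓ‖ ^ 2 - ∑ ℓ, ‖u ℓ‖ ^ 2 = 0 := by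
    rw [← Finset.sum_sub_distrib]
    have hS : ∑ ℓ, (v ℓ - u ℓ) * (starRingEnd ℂ) (w ℓ)
        = Complex.I * h / 2 * Q + Complex.I * h * P := by
      rw [hQdef, hPdef, Finset.mul_sum, Finset.mul_sum, ← Finset.sum_add_distrib]
      refine Finset.sum_congr rfl fun ℓ _ => ?_
      have hℓ := congrFun hvu ℓ
      simp only [Pi.sub_apply, Pi.add_apply, Pi.smul_apply, smul_eq_mul] at hℓ
      rw [hℓ]; ring
    calc ∑ ℓ, (‖v ℓ‖^2 - ‖u ℓ‖^2)
        = (∑ ℓ, (v ℓ - u ℓ) * (starRingEnd ℂ) (w ℓ)).re := by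
          rw [Complex.re_sum]; exact Finset.sum_congr rfl fun ℓ _ => h1 ℓ
      _ = 0 := by
          rw [hS]
          simp [Complex.add_re, Complex.mul_re, Complex.mul_im, Complex.div_re,
            Complex.div_im, hQ, hP, Complex.normSq_apply]
  have heq : ∑ ℓ, ‖v ℓ‖ ^ 2 = ∑ ℓ, ‖u ℓ‖ ^ 2 := by linarith
  rw [heq]
end
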